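/- Let X and Y be Polish, μ ∈ P(X), ν ∈ P(Y), and c : X × Y → [0,∞) continuous with T_c(μ,ν) < ∞. Let π ∈ C(μ,ν) be an optimal transport plan and f ∈ S_c(μ,ν) a Kantorovich potential. If π induces regularity on a relatively open set U ⊂ supp μ with respect to a compact set K ⊂ Y, then U ⊂ pr_X(supp π), f(x) = inf_{y∈K} (c(x,y) − f^c(y)) for all x ∈ U, and the restriction of f to supp μ is continuous at every point of U. -/

import Mathlib

open MeasureTheory Filter Set Topology
open scoped ENNReal NNReal Manifold

noncomputable section

/-- The topological support of a Borel measure: points all of whose open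
neighborhoods have positive measure. -/
def msupport {X : Type*} [TopologicalSpace X] [MeasurableSpace X]
    (μ : Measure X) : Set X :=
  {x | ∀ U : Set X, IsOpen U → x ∈ U → 0 < μ U}

/-- `π` is a coupling (transport plan) between `μ` and `ν`. -/
def IsCoupling {X Y : Type*} [MeasurableSpace X] [MeasurableSpace Y]
    (π : Measure (X × Y)) (μ : Measure X) (ν : Measure Y) : Prop :=
  π.map Prod.fst = μ ∧ π.map Prod.snd = ν

/-- The optimal transport cost `T_c(μ, ν)`. -/
def transportCost {X Y : Type*} [MeasurableSpace X] [MeasurableSpace Y]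
    (c : X → Y → ℝ) (μ : Measure X) (ν : Measure Y) : ℝ≥0∞ :=
  ⨅ (π : Measure (X × Y)) (_ : IsCoupling π μ ν),
    ∫⁻ p, ENNReal.ofReal (c p.1 p.2) ∂π

/-- `π` is an optimal transport plan between `μ` and `ν` for the cost `c`. -/
def IsOptimalPlan {X Y : Type*} [MeasurableSpace X] [MeasurableSpace Y]
    (c : X → Y → ℝ) (μ : Measure X) (ν : Measure Y) (π : Measure (X × Y)) : Prop :=
  IsCoupling π μ ν ∧
    ∫⁻ p, ENNReal.ofReal (c p.1 p.2) ∂π = transportCost c μ ν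

/-- The `c`-transform of a function `f : X → ℝ ∪ {-∞}`, namely
`f^c(y) = inf_x (c(x,y) - f(x))`. -/
def cTransform {X Y : Type*} (c : X → Y → ℝ) (f : X → EReal) : Y → EReal :=
  fun y => ⨅ x, ((c x y : ℝ) : EReal) - f x

/-- The `c`-transform of a function `g : Y → ℝ ∪ {-∞}`, namely
`g^c(x) = inf_y (c(x,y) - g(y))`. -/
def cTransformY {X Y : Type*} (c : X → Y → ℝ) (g : Y → EReal) : X → EReal :=
  fun x => ⨅ y, ((c x y : ℝ) : EReal) - g y

/-- `f : X → ℝ ∪ {-∞}` is `c`-concave on `X`: it is the `c`-transform of some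
`g : Y → ℝ ∪ {-∞}` and is not identically `-∞`. -/
def CConcave {X Y : Type*} (c : X → Y → ℝ) (f : X → EReal) : Prop :=
  (∃ g : Y → EReal, (∀ y, g y ≠ ⊤) ∧ f = cTransformY c g) ∧
    (∀ x, f x ≠ ⊤) ∧ (∃ x, f x ≠ ⊥)

/-- The `c`-subdifferential `∂_c f = {(x,y) | f(x) + f^c(y) = c(x,y)}`. -/
def cSubdiff {X Y : Type*} (c : X → Y → ℝ) (f : X → EReal) : Set (X × Y) :=
  {p | f p.1 + cTransform c f p.2 = ((c p.1 p.2 : ℝ) : EReal)}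

/-- `f` is a (generalized) Kantorovich potential for `(c, μ, ν)`: it is
`c`-concave and satisfies `f ⊕ f^c = c` almost surely with respect to every
optimal transport plan (which, for `T_c(μ,ν) < ∞`, is equivalent to
`∫ (f ⊕ f^c) dπ = T_c(μ,ν)` for every optimal `π`, since `f ⊕ f^c ≤ c`). -/
def IsKantorovichPotential {X Y : Type*} [MeasurableSpace X] [MeasurableSpace Y]
    (c : X → Y → ℝ) (μ : Measure X) (ν : Measure Y) (f : X → EReal) : Prop :=
  CConcave c f ∧
    ∀ π : Measure (X × Y), IsOptimalPlan c μ ν π →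
      ∀ᵐ p ∂π, f p.1 + cTransform c f p.2 = ((c p.1 p.2 : ℝ) : EReal)

/-- The plan `π` induces regularity on `U` with respect to the compact set `K`. -/
def InducesRegularityOn {X Y : Type*} [TopologicalSpace X] [TopologicalSpace Y]
    [MeasurableSpace X] [MeasurableSpace Y]
    (π : Measure (X × Y)) (U : Set X) (K : Set Y) : Prop :=
  IsCompact K ∧
    (Prod.fst '' msupport π) ∩ U = Prod.fst '' (msupport π ∩ (U ×ˢ K))

/-- The plan `π` induces regularity at the point `x ∈ supp μ`: it induces
regularity on some relatively open neighborhood `U ⊆ supp μ` of `x`. -/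
def InducesRegularityAt {X Y : Type*} [TopologicalSpace X] [TopologicalSpace Y]
    [MeasurableSpace X] [MeasurableSpace Y]
    (π : Measure (X × Y)) (μ : Measure X) (x : X) : Prop :=
  ∃ U : Set X, x ∈ U ∧ (∃ V : Set X, IsOpen V ∧ U = V ∩ msupport μ) ∧
    ∃ K : Set Y, InducesRegularityOn π U K

/-- `F` is a decomposition of the set `S` into its connected components. -/
def IsComponentDecomp {X : Type*} [TopologicalSpace X] {ι : Type*}
    (S : Set X) (F : ι → Set X) : Prop :=
  (⋃ i, F i) = S ∧ Pairwise (fun i j => Disjoint (F i) (F j)) ∧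
    ∀ i, ∃ x ∈ S, F i = connectedComponentIn S x

/-- A transport plan `π` is degenerate (with respect to decompositions `F`, `G`
of the supports of `μ` and `ν` into connected components). -/
def IsDegenerate {X Y : Type*} [MeasurableSpace X] [MeasurableSpace Y] {ι κ : Type*}
    (F : ι → Set X) (G : κ → Set Y) (μ : Measure X) (ν : Measure Y)
    (π : Measure (X × Y)) : Prop :=
  ∃ (I' : Set ι) (J' : Set κ),
    0 < (∑' i : I', μ (F i.1)) ∧
    (∑' i : I', μ (F i.1)) = (∑' i : I', ∑' j : J', π (F i.1 ×ˢ G j.1)) ∧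
    (∑' i : I', ∑' j : J', π (F i.1 ×ˢ G j.1)) = (∑' j : J', ν (G j.1)) ∧
    (∑' j : J', ν (G j.1)) < 1

end

section MyAux

open MeasureTheory Filter Set Topology

variable {X Y : Type*}

theorem myIsClosed_msupport [TopologicalSpace X] [MeasurableSpace X] (μ : Measure X) :
    IsClosed (msupport μ) := by
  rw [← isOpen_compl_iff, isOpen_iff_mem_nhds]
  intro x hx
  simp only [msupport, mem_compl_iff, mem_setOf_eq, not_forall] at hx
  obtain ⟨W, hW, hxW, hμW⟩ := hx
  have hμW0 : μ W = 0 := by simpa using hμW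
  refine Filter.mem_of_superset (hW.mem_nhds hxW) (fun y hy => ?_)
  simp only [msupport, mem_compl_iff, mem_setOf_eq, not_forall]
  exact ⟨W, hW, hy, by simp [hμW0]⟩

theorem myMeasure_eq_zero [TopologicalSpace X] [MeasurableSpace X] [SecondCountableTopology X]
    (μ : Measure X) {W : Set X} (hW : IsOpen W) (h : ∀ x ∈ W, x ∉ msupport μ) : μ W = 0 := by
  set S : Set (Set X) := {V | IsOpen V ∧ μ V = 0} with hS
  have hWsub : W ⊆ ⋃₀ S := by
    intro x hx
    have hx' := h x hx
    simp only [msupport, mem_setOf_eq, not_forall] at hx'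
    obtain ⟨V, hV, hxV, hV0⟩ := hx'
    exact ⟨V, ⟨hV, by simpa using hV0⟩, hxV⟩
  obtain ⟨T, hTc, hTS, hTU⟩ :=
    TopologicalSpace.isOpen_sUnion_countable S (fun s hs => hs.1)
  have hz : μ (⋃₀ S) = 0 := by
    rw [← hTU, measure_sUnion_null_iff hTc]
    exact fun s hs => (hTS hs).2
  exact le_antisymm ((measure_mono hWsub).trans hz.le) (zero_le)

theorem myMsupport_subset [TopologicalSpace X] [MeasurableSpace X] (μ : Measure X)
    {A : Set X} (hA : IsClosed A) (h : μ Aᶜ = 0) : msupport μ ⊆ A := by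
  intro x hx
  by_contra hxA
  have := hx Aᶜ hA.isOpen_compl hxA
  simp [h] at this

theorem myFst_msupport [TopologicalSpace X] [TopologicalSpace Y] [MeasurableSpace X]
    [MeasurableSpace Y] [OpensMeasurableSpace X] (π : Measure (X × Y)) (μ : Measure X)
    (hmap : π.map Prod.fst = μ) {p : X × Y} (hp : p ∈ msupport π) : p.1 ∈ msupport μ := by
  intro W hW hxW
  have hμW : μ W = π (Prod.fst ⁻¹' W) := by
    rw [← hmap, Measure.map_apply measurable_fst hW.measurableSet]
  rw [hμW]
  exact hp _ (hW.preimage continuous_fst) hxW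

theorem myClosedProj [TopologicalSpace X] [TopologicalSpace Y] {K : Set Y} (hK : IsCompact K)
    {C : Set (X × Y)} (hC : IsClosed C) : IsClosed {x : X | ∃ y ∈ K, (x, y) ∈ C} := by
  rw [← isOpen_compl_iff, isOpen_iff_mem_nhds]
  intro x hx
  have hsub : ({x} : Set X) ×ˢ K ⊆ Cᶜ := by
    rintro ⟨a, b⟩ ⟨ha, hb⟩
    simp only [mem_singleton_iff] at ha
    subst ha
    exact fun hC' => hx ⟨b, hb, hC'⟩
  obtain ⟨u, v, hu, hv, hxu, hKv, huv⟩ :=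
    generalized_tube_lemma isCompact_singleton hK hC.isOpen_compl hsub
  refine Filter.mem_of_superset (hu.mem_nhds (hxu rfl)) ?_
  rintro x' hx' ⟨y, hyK, hyC⟩
  exact huv ⟨hx', hKv hyK⟩ hyC

theorem myEReal_real {a : EReal} (h1 : a ≠ ⊥) (h2 : a ≠ ⊤) : ∃ r : ℝ, a = (r : EReal) := by
  induction a using EReal.rec with
  | bot => exact absurd rfl h1
  | top => exact absurd rfl h2
  | coe r => exact ⟨r, rfl⟩

theorem myEReal_split {u v : EReal} (hu : u ≠ ⊤) (hv : v ≠ ⊤) {q : ℝ}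
    (h : u + v < (q : EReal)) : ∃ s t : ℝ, u < (s : EReal) ∧ v < (t : EReal) ∧ s + t ≤ q := by
  induction u using EReal.rec with
  | top => exact absurd rfl hu
  | bot =>
    induction v using EReal.rec with
    | top => exact absurd rfl hv
    | bot => exact ⟨q / 2, q / 2, EReal.bot_lt_coe _, EReal.bot_lt_coe _, by linarith⟩
    | coe b =>
      exact ⟨q - b - 1, b + 1, EReal.bot_lt_coe _,
        EReal.coe_lt_coe_iff.2 (by linarith), by linarith⟩
  | coe a =>
    induction v using EReal.rec with
    | top => exact absurd rfl hv
    | bot =>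
      exact ⟨a + 1, q - a - 1, EReal.coe_lt_coe_iff.2 (by linarith),
        EReal.bot_lt_coe _, by linarith⟩
    | coe b =>
      have hab : a + b < q := by exact_mod_cast h
      exact ⟨a + (q - a - b) / 2, b + (q - a - b) / 2,
        EReal.coe_lt_coe_iff.2 (by linarith), EReal.coe_lt_coe_iff.2 (by linarith), by linarith⟩

theorem myEReal_extract {u v : EReal} (hu : u ≠ ⊤) (hv : v ≠ ⊤) {r : ℝ}
    (h : u + v = (r : EReal)) :
    ∃ a b : ℝ, u = (a : EReal) ∧ v = (b : EReal) ∧ a + b = r := by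
  induction u using EReal.rec with
  | bot => rw [EReal.bot_add] at h; exact absurd h.symm (EReal.coe_ne_bot r)
  | top => exact absurd rfl hu
  | coe a =>
    induction v using EReal.rec with
    | bot => rw [EReal.add_bot] at h; exact absurd h.symm (EReal.coe_ne_bot r)
    | top => exact absurd rfl hv
    | coe b => exact ⟨a, b, rfl, rfl, by exact_mod_cast h⟩

theorem myEReal_sub_sub {a : EReal} (ha : a ≠ ⊤) (r : ℝ) :
    a ≤ (r : EReal) - ((r : EReal) - a) := by
  induction a using EReal.rec with
  | bot => exact bot_le
  | top => exact absurd rfl ha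
  | coe s =>
    rw [← EReal.coe_sub, ← EReal.coe_sub]
    exact_mod_cast le_of_eq (by ring)

theorem myAdd_le {a b : EReal} {r : ℝ} (ha : a ≠ ⊤) (h : b ≤ (r : EReal) - a) :
    a + b ≤ (r : EReal) := by
  induction a using EReal.rec with
  | bot => rw [EReal.bot_add]; exact bot_le
  | top => exact absurd rfl ha
  | coe s =>
    calc (s : EReal) + b ≤ (s : EReal) + ((r : EReal) - (s : EReal)) := by
          exact add_le_add_right h _
    _ = (r : EReal) := by
          rw [← EReal.coe_sub, ← EReal.coe_add]
          norm_cast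
          ring

theorem myUSC_iInf {Z ι : Type*} [TopologicalSpace Z] {g : ι → Z → EReal}
    (h : ∀ i, UpperSemicontinuous (g i)) :
    UpperSemicontinuous (fun z => ⨅ i, g i z) := by
  intro z y hy
  obtain ⟨i, hi⟩ := iInf_lt_iff.1 hy
  filter_upwards [h i z y hi] with z' hz'
  exact lt_of_le_of_lt (iInf_le _ i) hz'

theorem myUSC_term {Z : Type*} [TopologicalSpace Z] {d : Z → ℝ} (hd : Continuous d)
    {a : EReal} (ha : a ≠ ⊤) : Continuous (fun z => ((d z : ℝ) : EReal) - a) := by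
  induction a using EReal.rec with
  | bot => simp only [EReal.coe_sub_bot]; exact continuous_const
  | top => exact absurd rfl ha
  | coe r =>
    have heq : (fun z => ((d z : ℝ) : EReal) - ((r : ℝ) : EReal))
        = fun z => (((d z - r : ℝ)) : EReal) := by
      funext z; rw [EReal.coe_sub]
    rw [heq]
    exact continuous_coe_real_ereal.comp (hd.sub continuous_const)

theorem myUSC_cT {Z W : Type*} [TopologicalSpace Z] [TopologicalSpace W] {e : Z → W → ℝ}
    (he : Continuous fun p : Z × W => e p.1 p.2) {g : W → EReal} (hg : ∀ w, g w ≠ ⊤) :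
    UpperSemicontinuous (fun z => ⨅ w, ((e z w : ℝ) : EReal) - g w) := by
  refine myUSC_iInf (fun w => ?_)
  have hcont : Continuous fun z => e z w :=
    he.comp (continuous_id.prodMk continuous_const)
  exact (myUSC_term hcont (hg w)).upperSemicontinuous

theorem myExists_eps_upper {a : ℝ} {z : EReal} (h : (a : EReal) < z) :
    ∃ ε : ℝ, 0 < ε ∧ ((a + ε : ℝ) : EReal) ≤ z := by
  induction z using EReal.rec with
  | bot => exact absurd h (by simp)
  | top => exact ⟨1, one_pos, le_top⟩
  | coe zr =>
    have haz : a < zr := by exact_mod_cast h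
    exact ⟨(zr - a) / 2, by linarith, by exact_mod_cast (by linarith : a + (zr - a) / 2 ≤ zr)⟩

theorem myExists_eps_lower {a : ℝ} {z : EReal} (h : z < (a : EReal)) :
    ∃ ε : ℝ, 0 < ε ∧ z ≤ ((a - ε : ℝ) : EReal) := by
  induction z using EReal.rec with
  | bot => exact ⟨1, one_pos, bot_le⟩
  | top => exact absurd h (by simp)
  | coe zr =>
    have haz : zr < a := by exact_mod_cast h
    exact ⟨(a - zr) / 2, by linarith, by exact_mod_cast (by linarith : zr ≤ a - (a - zr) / 2)⟩

end MyAux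

/-- If an optimal plan induces regularity on a relatively open
set `U ⊆ supp μ` w.r.t. a compact `K`, then `U ⊆ pr_X(supp π)`, the potential is
given by an infimum over `K` on `U`, and `f|_{supp μ}` is continuous on `U`. -/
theorem stmt1 {X Y : Type*}
    [TopologicalSpace X] [PolishSpace X] [MeasurableSpace X] [BorelSpace X]
    [TopologicalSpace Y] [PolishSpace Y] [MeasurableSpace Y] [BorelSpace Y]
    (c : X → Y → ℝ) (hc0 : ∀ x y, 0 ≤ c x y)
    (hccont : Continuous fun p : X × Y => c p.1 p.2)
    (μ : Measure X) (ν : Measure Y) [IsProbabilityMeasure μ] [IsProbabilityMeasure ν]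
    (hT : transportCost c μ ν < ⊤)
    (π : Measure (X × Y)) (hπ : IsOptimalPlan c μ ν π)
    (f : X → EReal) (hf : IsKantorovichPotential c μ ν f)
    (U : Set X) (hUsub : U ⊆ msupport μ)
    (hUopen : ∃ V : Set X, IsOpen V ∧ U = V ∩ msupport μ)
    (K : Set Y) (hreg : InducesRegularityOn π U K) :
    U ⊆ Prod.fst '' msupport π ∧
      (∀ x ∈ U, f x = ⨅ y : K, (((c x y.1 : ℝ) : EReal) - cTransform c f y.1)) ∧
      (∀ x ∈ U, ContinuousWithinAt f (msupport μ) x) := by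
  obtain ⟨V, hV, hUV⟩ := hUopen
  have hK : IsCompact K := hreg.1
  have hregeq := hreg.2
  have hmapfst : π.map Prod.fst = μ := hπ.1.1
  have hftop : ∀ x, f x ≠ ⊤ := hf.1.2.1
  -- the c-transform is never ⊤
  have hfc_ne_top : ∀ y, cTransform c f y ≠ ⊤ := by
    intro y
    obtain ⟨x₀, hx₀⟩ := hf.1.2.2
    obtain ⟨r₀, hr₀⟩ := myEReal_real hx₀ (hftop x₀)
    have h1 : cTransform c f y ≤ ((c x₀ y : ℝ) : EReal) - f x₀ := iInf_le _ x₀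
    rw [hr₀, ← EReal.coe_sub] at h1
    exact ne_top_of_le_ne_top (EReal.coe_ne_top _) h1
  -- fundamental inequalities
  have hfx_le : ∀ x y, f x ≤ ((c x y : ℝ) : EReal) - cTransform c f y := by
    intro x y
    have h1 : cTransform c f y ≤ ((c x y : ℝ) : EReal) - f x := iInf_le _ x
    calc f x ≤ ((c x y : ℝ) : EReal) - (((c x y : ℝ) : EReal) - f x) :=
          myEReal_sub_sub (hftop x) _
    _ ≤ ((c x y : ℝ) : EReal) - cTransform c f y := EReal.sub_le_sub le_rfl h1
  have hle : ∀ x y, f x + cTransform c f y ≤ ((c x y : ℝ) : EReal) := by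
    intro x y
    exact myAdd_le (hftop x) (iInf_le _ x)
  -- upper semicontinuity of f and of the c-transform
  have husc_f : UpperSemicontinuous f := by
    obtain ⟨g, hgtop, hfeq⟩ := hf.1.1
    rw [hfeq]
    exact myUSC_cT hccont hgtop
  have husc_fc : UpperSemicontinuous (cTransform c f) := by
    have : Continuous fun p : Y × X => c p.2 p.1 :=
      hccont.comp (continuous_snd.prodMk continuous_fst)
    exact myUSC_cT this hftop
  -- the set where equality may hold is closed
  have hSclosed :
      IsClosed {p : X × Y | ((c p.1 p.2 : ℝ) : EReal) ≤ f p.1 + cTransform c f p.2} := by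
    rw [← isOpen_compl_iff, isOpen_iff_mem_nhds]
    rintro ⟨a₀, b₀⟩ hp
    simp only [mem_compl_iff, mem_setOf_eq, not_le] at hp
    obtain ⟨z, hz1, hz2⟩ := exists_between hp
    obtain ⟨q, hq⟩ := myEReal_real (a := z) (fun h => absurd (h ▸ hz1) not_lt_bot)
      (fun h => absurd (h ▸ hz2) not_top_lt)
    rw [hq] at hz1 hz2
    obtain ⟨s, t, hs, ht, hst⟩ := myEReal_split (hftop a₀) (hfc_ne_top b₀) hz1
    have ev1 : ∀ᶠ a in 𝓝 a₀, f a < (s : EReal) := husc_f a₀ _ hs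
    have ev2 : ∀ᶠ b in 𝓝 b₀, cTransform c f b < (t : EReal) := husc_fc b₀ _ ht
    have ev3 : ∀ᶠ p : X × Y in 𝓝 (a₀, b₀), q < c p.1 p.2 := by
      have hop : IsOpen {p : X × Y | q < c p.1 p.2} := isOpen_lt continuous_const hccont
      exact hop.mem_nhds (by exact_mod_cast hz2)
    filter_upwards [(continuous_fst.tendsto (a₀, b₀)).eventually ev1,
      (continuous_snd.tendsto (a₀, b₀)).eventually ev2, ev3] with p h1 h2 h3
    simp only [mem_compl_iff, mem_setOf_eq, not_le]
    calc f p.1 + cTransform c f p.2 < (s : EReal) + (t : EReal) := EReal.add_lt_add h1 h2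
    _ = ((s + t : ℝ) : EReal) := (EReal.coe_add s t).symm
    _ ≤ (q : EReal) := by exact_mod_cast hst
    _ < ((c p.1 p.2 : ℝ) : EReal) := by exact_mod_cast h3
  -- the support of π is contained in the equality set
  have hsupp_sub : msupport π ⊆
      {p : X × Y | ((c p.1 p.2 : ℝ) : EReal) ≤ f p.1 + cTransform c f p.2} := by
    apply myMsupport_subset π hSclosed
    have hae := hf.2 π hπ
    rw [ae_iff] at hae
    refine measure_mono_null ?_ hae
    intro p hp
    simp only [mem_compl_iff, mem_setOf_eq, not_le] at hp
    exact ne_of_lt hp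
  have heq : ∀ p ∈ msupport π, f p.1 + cTransform c f p.2 = ((c p.1 p.2 : ℝ) : EReal) :=
    fun p hp => le_antisymm (hle _ _) (hsupp_sub hp)
  -- p.1 ∈ msupport μ for p in the support of π
  have hproj : ∀ p ∈ msupport π, p.1 ∈ msupport μ :=
    fun p hp => myFst_msupport π μ hmapfst hp
  -- key fact: every point of U has a partner in K within the support of π
  have key : ∀ x ∈ U, ∃ y ∈ K, (x, y) ∈ msupport π := by
    intro x hxU
    have hxQ : x ∈ closure {x' : X | ∃ y ∈ K, (x', y) ∈ msupport π} := by
      rw [mem_closure_iff]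
      intro W hW hxW
      have hxV : x ∈ V := (hUV ▸ hxU).1
      have hWV : IsOpen (W ∩ V) := hW.inter hV
      have hμpos : 0 < μ (W ∩ V) := hUsub hxU (W ∩ V) hWV ⟨hxW, hxV⟩
      have hex : ∃ a ∈ W ∩ V, a ∈ Prod.fst '' msupport π := by
        by_contra hcon
        push_neg at hcon
        have hz : π (Prod.fst ⁻¹' (W ∩ V)) = 0 := by
          apply myMeasure_eq_zero
          · exact hWV.preimage continuous_fst
          · rintro ⟨a, b⟩ hab hmem
            exact hcon a hab ⟨(a, b), hmem, rfl⟩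
        have hμ0 : μ (W ∩ V) = 0 := by
          rw [← hmapfst, Measure.map_apply measurable_fst hWV.measurableSet, hz]
        simp [hμ0] at hμpos
      obtain ⟨a, haWV, hafst⟩ := hex
      have haU : a ∈ U := by
        rw [hUV]
        obtain ⟨p, hp, hpa⟩ := hafst
        exact ⟨haWV.2, hpa ▸ hproj p hp⟩
      have ha2 : a ∈ Prod.fst '' (msupport π ∩ U ×ˢ K) := by
        rw [← hregeq]; exact ⟨hafst, haU⟩
      obtain ⟨p, ⟨hpP, hpU, hpK⟩, hpa⟩ := ha2
      refine ⟨a, haWV.1, p.2, hpK, ?_⟩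
      rw [← hpa]
      simpa using hpP
    rwa [(myClosedProj hK (myIsClosed_msupport π)).closure_eq] at hxQ
  -- refined key fact with real values
  have hkey2 : ∀ x ∈ U, ∃ (y : Y) (a b : ℝ), y ∈ K ∧ f x = (a : EReal) ∧
      cTransform c f y = (b : EReal) ∧ a + b = c x y := by
    intro x hx
    obtain ⟨y, hyK, hyP⟩ := key x hx
    have hEq := heq (x, y) hyP
    obtain ⟨a, b, ha, hb, hab⟩ := myEReal_extract (hftop x) (hfc_ne_top y) hEq
    exact ⟨y, a, b, hyK, ha, hb, hab⟩
  refine ⟨?_, ?_, ?_⟩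
  · -- part 1
    intro x hx
    obtain ⟨y, hyK, hyP⟩ := key x hx
    exact ⟨(x, y), hyP, rfl⟩
  · -- part 2
    intro x hx
    obtain ⟨y, a, b, hyK, ha, hb, hab⟩ := hkey2 x hx
    refine le_antisymm (le_iInf fun y' => hfx_le x y'.1) ?_
    have hfxeq : (((c x y : ℝ) : EReal) - cTransform c f y) = f x := by
      rw [hb, ha, ← EReal.coe_sub]
      norm_cast
      linarith
    exact le_of_le_of_eq (iInf_le _ (⟨y, hyK⟩ : K)) hfxeq
  · -- part 3
    intro x hx
    obtain ⟨y₀, a₀, b₀, hy₀K, ha₀, hb₀, hab₀⟩ := hkey2 x hx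
    have hxV : x ∈ V := (hUV ▸ hx).1
    have hUev : ∀ᶠ x' in 𝓝[msupport μ] x, x' ∈ U := by
      have h1 : ∀ᶠ x' in 𝓝[msupport μ] x, x' ∈ V :=
        mem_nhdsWithin_of_mem_nhds (hV.mem_nhds hxV)
      have h2 : ∀ᶠ x' in 𝓝[msupport μ] x, x' ∈ msupport μ := self_mem_nhdsWithin
      filter_upwards [h1, h2] with x' hx'1 hx'2
      rw [hUV]; exact ⟨hx'1, hx'2⟩
    unfold ContinuousWithinAt
    rw [ha₀, tendsto_order]
    constructor
    · -- lower semicontinuity at x along msupport μ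
      intro z hz
      obtain ⟨ε, hε0, hεz⟩ := myExists_eps_lower hz
      have hcont2 : Continuous fun p : X × Y => c x p.2 - c p.1 p.2 := by
        exact (hccont.comp (continuous_const.prodMk continuous_snd)).sub hccont
      have hsub : ({x} : Set X) ×ˢ K ⊆ {p : X × Y | c x p.2 - c p.1 p.2 < ε} := by
        rintro ⟨a, b⟩ ⟨haa, hbb⟩
        simp only [mem_singleton_iff] at haa
        subst haa
        simpa using hε0
      obtain ⟨u, v, hu, hv, hxu, hKv, huv⟩ := generalized_tube_lemma isCompact_singleton hK
        (isOpen_lt hcont2 continuous_const) hsub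
      have huev : ∀ᶠ x' in 𝓝[msupport μ] x, x' ∈ u :=
        mem_nhdsWithin_of_mem_nhds (hu.mem_nhds (hxu rfl))
      filter_upwards [hUev, huev] with x' hx'U hx'u
      obtain ⟨y', a', b', hy'K, ha', hb', hab'⟩ := hkey2 x' hx'U
      have h1 : c x y' - c x' y' < ε := huv (show (x', y') ∈ u ×ˢ v from ⟨hx'u, hKv hy'K⟩)
      have h2 : f x ≤ ((c x y' : ℝ) : EReal) - cTransform c f y' := hfx_le x y'
      rw [ha₀, hb', ← EReal.coe_sub] at h2
      have h2' : a₀ ≤ c x y' - b' := by exact_mod_cast h2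
      rw [ha']
      refine lt_of_le_of_lt hεz ?_
      exact_mod_cast (by linarith : a₀ - ε < a')
    · -- upper semicontinuity at x along msupport μ
      intro z hz
      obtain ⟨ε, hε0, hεz⟩ := myExists_eps_upper hz
      have hcy : Continuous fun x' => c x' y₀ := by
        exact hccont.comp (continuous_id.prodMk continuous_const)
      have hev : ∀ᶠ x' in 𝓝[msupport μ] x, c x' y₀ < c x y₀ + ε := by
        refine mem_nhdsWithin_of_mem_nhds
          ((isOpen_lt hcy continuous_const).mem_nhds ?_)
        simp only [mem_setOf_eq]
        linarith
      filter_upwards [hev] with x' h1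
      have h2 : f x' ≤ ((c x' y₀ : ℝ) : EReal) - cTransform c f y₀ := hfx_le x' y₀
      rw [hb₀, ← EReal.coe_sub] at h2
      calc f x' ≤ ((c x' y₀ - b₀ : ℝ) : EReal) := h2
      _ < ((a₀ + ε : ℝ) : EReal) := by
          exact_mod_cast (by linarith : c x' y₀ - b₀ < a₀ + ε)
      _ ≤ z := hεz
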